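/- If f : {0,1}^{n+m} → ℝ≥0 is log-supermodular, then the marginal g : {0,1}^n → ℝ≥0 defined by g(y) = ∑_{s ∈ {0,1}^m} f(y, s) is log-supermodular. -/

import Mathlib

open scoped NNReal

lemma append_inf {n m : ℕ} (a c : Fin n → Bool) (b d : Fin m → Bool) :
    Fin.append a b ⊓ Fin.append c d = Fin.append (a ⊓ c) (b ⊓ d) := by
  funext i
  refine Fin.addCases (fun j => ?_) (fun j => ?_) i <;>
    simp [Fin.append_left, Fin.append_right, Pi.inf_apply]

lemma append_sup {n m : ℕ} (a c : Fin n → Bool) (b d : Fin m → Bool) :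
    Fin.append a b ⊔ Fin.append c d = Fin.append (a ⊔ c) (b ⊔ d) := by
  funext i
  refine Fin.addCases (fun j => ?_) (fun j => ?_) i <;>
    simp [Fin.append_left, Fin.append_right, Pi.sup_apply]

/-- If `f : {0,1}^{n+m} → ℝ≥0` is log-supermodular, then the marginal
`g(y) = ∑_{s ∈ {0,1}^m} f(y, s)` is log-supermodular on `{0,1}ⁿ`. -/
theorem marginal_logSupermodular {n m : ℕ} (f : (Fin (n + m) → Bool) → ℝ≥0)
    (hf : ∀ x y : Fin (n + m) → Bool, f x * f y ≤ f (x ⊓ y) * f (x ⊔ y))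
    (g : (Fin n → Bool) → ℝ≥0)
    (hg : ∀ y : Fin n → Bool, g y = ∑ s : Fin m → Bool, f (Fin.append y s)) :
    ∀ y y' : Fin n → Bool, g y * g y' ≤ g (y ⊓ y') * g (y ⊔ y') := by
  intro y y'
  simp only [hg]
  refine four_functions_theorem_univ (fun s => f (Fin.append y s))
    (fun s => f (Fin.append y' s)) (fun s => f (Fin.append (y ⊓ y') s))
    (fun s => f (Fin.append (y ⊔ y') s)) (fun _ => zero_le) (fun _ => zero_le)
    (fun _ => zero_le) (fun _ => zero_le) (fun s t => ?_)
  simpa [append_inf, append_sup] using hf (Fin.append y s) (Fin.append y' t)
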